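/- Let (X,Σ) be a stratified sample of ℝ^N with X compact and Σ nonempty, such that the induced strongly stratified sample ε_s(X,Σ) = (X, s_Σ) has cylinder structure, and fix v = (v₁,v₂) ∈ Ω. Then: (i) for every ε > 0 there is δ > 0 such that every stratified sample (X',Σ') with Σ' nonempty, d_H(X,X') < δ and d_H(Σ,Σ') < δ satisfies: each of the three componentwise Hausdorff distances between D_v(ε_s(X,Σ)) and D_v(ε_s(X',Σ')) is at most ε. (ii) If moreover there are K ≥ 0 and ρ > 0 such that d_H(X^a_b, X^{a'}_{b'}) ≤ K·max(|a−a'|, |b−b'|) for all a,a' ∈ (v₁−ρ, v₁+ρ) and b,b' ∈ (v₂−ρ, v₂+ρ) with a ≤ b and a' ≤ b' (interval level sets taken with respect to s_Σ), then there is δ₀ > 0 such that for every 0 < δ ≤ δ₀ and every stratified sample (X',Σ') with Σ' nonempty, d_H(X,X') < δ and d_H(Σ,Σ') < δ, each of the three componentwise Hausdorff distances between D_v(ε_s(X,Σ)) and D_v(ε_s(X',Σ')) is at most 2(K+1)δ. (This is the diagram-level content of the theorem that the persistent stratified homotopy type ε_P^v is continuous, respectively 2(K+1)-Lipschitz, at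 compact cylindrically stratified spaces.) -/

import Mathlib

open Metric Set Filter
open scoped ENNReal

namespace Stmt12

variable {N : ℕ}

/-- Sublevel set `X_{≤ b}`. -/
def sub (X : Set (EuclideanSpace ℝ (Fin N))) (s : EuclideanSpace ℝ (Fin N) → ℝ) (b : ℝ) :
    Set (EuclideanSpace ℝ (Fin N)) := {x | x ∈ X ∧ s x ≤ b}

/-- Superlevel set `X_{≥ a}`. -/
def supl (X : Set (EuclideanSpace ℝ (Fin N))) (s : EuclideanSpace ℝ (Fin N) → ℝ) (a : ℝ) :
    Set (EuclideanSpace ℝ (Fin N)) := {x | x ∈ X ∧ a ≤ s x}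

/-- Interval level set `X^a_b`. -/
def ival (X : Set (EuclideanSpace ℝ (Fin N))) (s : EuclideanSpace ℝ (Fin N) → ℝ) (a b : ℝ) :
    Set (EuclideanSpace ℝ (Fin N)) := {x | x ∈ X ∧ a ≤ s x ∧ s x ≤ b}

/-- The parameter space `Ω = {(v₁,v₂) : 0 < v₁ < v₂ < 1}`. -/
def Omega : Set (ℝ × ℝ) := {p | 0 < p.1 ∧ p.1 < p.2 ∧ p.2 < 1}

/-- The stratification diagram `D_v(X,s) = (X_{≤v₂}, X^{v₁}_{v₂}, X_{≥v₁})`. -/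
def Dv (X : Set (EuclideanSpace ℝ (Fin N))) (s : EuclideanSpace ℝ (Fin N) → ℝ) (v : ℝ × ℝ) :
    Set (EuclideanSpace ℝ (Fin N)) × Set (EuclideanSpace ℝ (Fin N)) ×
      Set (EuclideanSpace ℝ (Fin N)) :=
  (sub X s v.2, ival X s v.1 v.2, supl X s v.1)

/-- Maximum of the three componentwise Hausdorff distances between two diagram triples. -/
noncomputable def diagDist
    (D D' : Set (EuclideanSpace ℝ (Fin N)) × Set (EuclideanSpace ℝ (Fin N)) ×
      Set (EuclideanSpace ℝ (Fin N))) : ℝ≥0∞ :=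
  max (EMetric.hausdorffEdist D.1 D'.1)
    (max (EMetric.hausdorffEdist D.2.1 D'.2.1) (EMetric.hausdorffEdist D.2.2 D'.2.2))

/-- Two strongly stratified samples are `δ`-close. -/
def StronglyClose (δ : ℝ) (X X' : Set (EuclideanSpace ℝ (Fin N)))
    (s s' : EuclideanSpace ℝ (Fin N) → ℝ) : Prop :=
  (∀ x ∈ X, ∃ y ∈ X', ‖x - y‖ ≤ δ ∧ |s x - s' y| ≤ δ) ∧
  (∀ y ∈ X', ∃ x ∈ X, ‖x - y‖ ≤ δ ∧ |s x - s' y| ≤ δ)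

/-- The induced strong stratification of a stratified sample `(X, Σ)`:
`s_Σ(x) := min (dist x Σ) 1`. -/
noncomputable def inducedStrat (Sg : Set (EuclideanSpace ℝ (Fin N)))
    (x : EuclideanSpace ℝ (Fin N)) : ℝ :=
  min (Metric.infDist x Sg) 1

/-- A strongly stratified sample `(X,s)` has cylinder structure if, with
`L := s⁻¹({1/2})`, there is a homeomorphism `f : s⁻¹((0,1)) ≃ₜ L × (0,1)` over `(0,1)`. -/
def HasCylinderStructure (X : Set (EuclideanSpace ℝ (Fin N)))
    (s : EuclideanSpace ℝ (Fin N) → ℝ) : Prop :=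
  ∃ f : {x : EuclideanSpace ℝ (Fin N) // x ∈ X ∧ s x ∈ Set.Ioo (0 : ℝ) 1} ≃ₜ
      ({x : EuclideanSpace ℝ (Fin N) // x ∈ X ∧ s x = 1 / 2} × Set.Ioo (0 : ℝ) 1),
    ∀ x, ((f x).2 : ℝ) = s x.1

lemma strat_nonneg (Sg : Set (EuclideanSpace ℝ (Fin N))) (x : EuclideanSpace ℝ (Fin N)) :
    0 ≤ inducedStrat Sg x :=
  le_min Metric.infDist_nonneg zero_le_one

lemma strat_le_one (Sg : Set (EuclideanSpace ℝ (Fin N))) (x : EuclideanSpace ℝ (Fin N)) :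
    inducedStrat Sg x ≤ 1 := min_le_right _ _

lemma strat_lip (Sg : Set (EuclideanSpace ℝ (Fin N))) (x y : EuclideanSpace ℝ (Fin N)) :
    inducedStrat Sg x ≤ inducedStrat Sg y + dist x y := by
  have h := Metric.infDist_le_infDist_add_dist (x := x) (y := y) (s := Sg)
  have hd : (0:ℝ) ≤ dist x y := dist_nonneg
  calc min (Metric.infDist x Sg) 1 ≤ min (Metric.infDist y Sg + dist x y) (1 + dist x y) :=
        min_le_min h (by linarith)
    _ = min (Metric.infDist y Sg) 1 + dist x y := min_add_add_right _ _ _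

lemma strat_cont (Sg : Set (EuclideanSpace ℝ (Fin N))) : Continuous (inducedStrat Sg) :=
  (Metric.continuous_infDist_pt Sg).min continuous_const

lemma strat_close {Sg Sg' : Set (EuclideanSpace ℝ (Fin N))} {δ : ℝ} (hδ : 0 ≤ δ)
    (h : EMetric.hausdorffEdist Sg Sg' < ENNReal.ofReal δ)
    (x : EuclideanSpace ℝ (Fin N)) :
    inducedStrat Sg x ≤ inducedStrat Sg' x + δ := by
  have hfin : EMetric.hausdorffEdist Sg' Sg ≠ ⊤ := by
    rw [EMetric.hausdorffEdist, Metric.hausdorffEDist_comm]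
    exact h.ne_top
  have h1 : Metric.infDist x Sg ≤ Metric.infDist x Sg' + Metric.hausdorffDist Sg' Sg :=
    Metric.infDist_le_infDist_add_hausdorffDist hfin
  have h2 : Metric.hausdorffDist Sg' Sg ≤ δ := by
    rw [Metric.hausdorffDist, EMetric.hausdorffEdist_comm]
    exact ENNReal.toReal_le_of_le_ofReal hδ h.le
  calc min (Metric.infDist x Sg) 1 ≤ min (Metric.infDist x Sg' + δ) (1 + δ) :=
        min_le_min (by linarith) (by linarith)
    _ = min (Metric.infDist x Sg') 1 + δ := min_add_add_right _ _ _

lemma haus_le {A B : Set (EuclideanSpace ℝ (Fin N))} {r : ℝ} (hr : 0 ≤ r)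
    (h1 : ∀ a ∈ A, ∃ b ∈ B, dist a b ≤ r) (h2 : ∀ b ∈ B, ∃ a ∈ A, dist b a ≤ r) :
    EMetric.hausdorffEdist A B ≤ ENNReal.ofReal r :=
  EMetric.hausdorffEdist_le_of_mem_edist
    (fun a ha => by obtain ⟨b, hb, hd⟩ := h1 a ha; exact ⟨b, hb, (edist_le_ofReal hr).mpr hd⟩)
    (fun b hb => by obtain ⟨a, ha, hd⟩ := h2 b hb; exact ⟨a, ha, (edist_le_ofReal hr).mpr hd⟩)

lemma near_of_haus {A B : Set (EuclideanSpace ℝ (Fin N))} {x : EuclideanSpace ℝ (Fin N)}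
    (hx : x ∈ A) {c r : ℝ} (hc : 0 ≤ c) (hr : c < r)
    (h : EMetric.hausdorffEdist A B ≤ ENNReal.ofReal c) :
    ∃ z ∈ B, dist x z ≤ r := by
  have h1 : EMetric.infEdist x B ≤ ENNReal.ofReal c :=
    (EMetric.infEdist_le_hausdorffEdist_of_mem hx).trans h
  have h2 : EMetric.infEdist x B < ENNReal.ofReal r :=
    h1.trans_lt ((ENNReal.ofReal_lt_ofReal_iff (hc.trans_lt hr)).mpr hr)
  obtain ⟨z, hz, hd⟩ := EMetric.infEdist_lt_iff.mp h2
  exact ⟨z, hz, (edist_lt_ofReal.mp hd).le⟩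


lemma exists_level_near {X : Set (EuclideanSpace ℝ (Fin N))} {s : EuclideanSpace ℝ (Fin N) → ℝ}
    (hcyl : HasCylinderStructure X s) {x : EuclideanSpace ℝ (Fin N)} (hx : x ∈ X)
    (hsx : s x ∈ Set.Ioo (0:ℝ) 1) {ε : ℝ} (hε : 0 < ε) :
    ∃ η > 0, ∀ t : ℝ, t ∈ Set.Ioo (0:ℝ) 1 → |t - s x| < η →
      ∃ z ∈ X, s z = t ∧ dist x z ≤ ε := by
  obtain ⟨f, hf⟩ := hcyl
  set px : {x : EuclideanSpace ℝ (Fin N) // x ∈ X ∧ s x ∈ Set.Ioo (0:ℝ) 1} := ⟨x, hx, hsx⟩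
    with hpx
  set ℓ := (f px).1 with hℓ
  set G : Set.Ioo (0:ℝ) 1 → EuclideanSpace ℝ (Fin N) :=
    fun u => ((f.symm (ℓ, u) :
      {x : EuclideanSpace ℝ (Fin N) // x ∈ X ∧ s x ∈ Set.Ioo (0:ℝ) 1}) :
      EuclideanSpace ℝ (Fin N)) with hG
  have hGc : Continuous G :=
    continuous_subtype_val.comp (f.symm.continuous.comp (Continuous.prodMk_right ℓ))
  have hu0 : f.symm (ℓ, ⟨s x, hsx⟩) = px := by
    have h2 : (f px).2 = ⟨s x, hsx⟩ := Subtype.ext (hf px)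
    have : (ℓ, (⟨s x, hsx⟩ : Set.Ioo (0:ℝ) 1)) = f px := by rw [← h2]
    rw [this, Homeomorph.symm_apply_apply]
  obtain ⟨η, hη, hball⟩ := Metric.continuousAt_iff.mp hGc.continuousAt ε hε
  refine ⟨η, hη, fun t ht hclose => ?_⟩
  have hd : dist (⟨t, ht⟩ : Set.Ioo (0:ℝ) 1) ⟨s x, hsx⟩ < η := by
    rw [Subtype.dist_eq, Real.dist_eq]; exact hclose
  have hdist := hball hd
  refine ⟨G ⟨t, ht⟩, (f.symm (ℓ, ⟨t, ht⟩)).2.1, ?_, ?_⟩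
  · have h2 := hf (f.symm (ℓ, ⟨t, ht⟩))
    rw [Homeomorph.apply_symm_apply] at h2
    exact h2.symm
  · have : G ⟨s x, hsx⟩ = x := by rw [hG]; simp only [hu0]; rfl
    rw [this] at hdist
    rw [dist_comm]
    exact hdist.le

lemma approx_sub {X : Set (EuclideanSpace ℝ (Fin N))} {s : EuclideanSpace ℝ (Fin N) → ℝ}
    (hXc : IsCompact X) (hs : Continuous s) (hs0 : ∀ x, 0 ≤ s x)
    (hcyl : HasCylinderStructure X s) {v₂ : ℝ} (h0 : 0 < v₂) (h1 : v₂ < 1)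
    {ε : ℝ} (hε : 0 < ε) :
    ∃ η > 0, ∀ x ∈ X, s x ≤ v₂ + η → ∃ z ∈ X, s z ≤ v₂ - η ∧ dist x z ≤ ε := by
  by_contra hcon
  push_neg at hcon
  choose xs hxsX hxsle hfar using fun n : ℕ => hcon (1/((n:ℝ)+1)) (by positivity)
  obtain ⟨xl, hxlX, φ, hφ, hconv⟩ := hXc.tendsto_subseq hxsX
  have hφtop : Tendsto φ atTop atTop := hφ.tendsto_atTop
  have hslim : Tendsto (fun k => s (xs (φ k))) atTop (nhds (s xl)) :=
    (hs.tendsto xl).comp hconv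
  have hupper : Tendsto (fun k => v₂ + 1/((φ k : ℝ)+1)) atTop (nhds (v₂ + 0)) :=
    tendsto_const_nhds.add (tendsto_one_div_add_atTop_nhds_zero_nat.comp hφtop)
  have hsxl : s xl ≤ v₂ := by
    have := le_of_tendsto_of_tendsto' hslim hupper (fun k => hxsle (φ k))
    simpa using this
  -- produce a point z at level ≤ v₂ - 1/(m+1) within ε/2 of xl
  have hclaim : ∃ m : ℕ, ∃ z ∈ X, s z ≤ v₂ - 1/((m:ℝ)+1) ∧ dist xl z ≤ ε/2 := by
    by_cases hio : s xl ∈ Set.Ioo (0:ℝ) 1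
    · obtain ⟨η', hη', hlev⟩ := exists_level_near hcyl hxlX hio (half_pos hε)
      obtain ⟨m, hm⟩ := exists_nat_one_div_lt (lt_min hη' h0)
      have hmη : 1/((m:ℝ)+1) < η' := hm.trans_le (min_le_left _ _)
      have hmv : 1/((m:ℝ)+1) < v₂ := hm.trans_le (min_le_right _ _)
      have hmpos : (0:ℝ) < 1/((m:ℝ)+1) := by positivity
      set t := min (s xl) (v₂ - 1/((m:ℝ)+1)) with htdef
      have htIoo : t ∈ Set.Ioo (0:ℝ) 1 :=
        ⟨lt_min hio.1 (by linarith), lt_of_le_of_lt (min_le_left _ _) hio.2⟩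
      have htcl : |t - s xl| < η' := by
        rw [abs_sub_lt_iff]
        constructor
        · have : t ≤ s xl := min_le_left _ _
          linarith
        · have : s xl - 1/((m:ℝ)+1) ≤ t := le_min (by linarith) (by linarith)
          linarith
      obtain ⟨z, hzX, hzt, hzd⟩ := hlev t htIoo htcl
      exact ⟨m, z, hzX, by rw [hzt]; exact min_le_right _ _, hzd⟩
    · have hz : s xl = 0 := by
        rcases lt_or_ge (s xl) 1 with h | h
        · by_contra hne0
          exact hio ⟨lt_of_le_of_ne (hs0 xl) (Ne.symm hne0), h⟩
        · linarith
      obtain ⟨m, hm⟩ := exists_nat_one_div_lt h0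
      exact ⟨m, xl, hxlX, by linarith, by simp; positivity⟩
  obtain ⟨m, z, hzX, hzle, hzd⟩ := hclaim
  obtain ⟨k₀, hk₀⟩ := Metric.tendsto_atTop.mp hconv (ε/2) (half_pos hε)
  set k := max k₀ m with hk
  have hφk : (m:ℝ) + 1 ≤ (φ k : ℝ) + 1 := by
    have h' : m ≤ φ k := le_trans (le_max_right k₀ m) (hφ.le_apply)
    have h'' : (m:ℝ) ≤ (φ k : ℝ) := Nat.cast_le.mpr h'
    linarith
  have hinv : 1/((φ k : ℝ)+1) ≤ 1/((m:ℝ)+1) :=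
    one_div_le_one_div_of_le (by positivity) hφk
  have hfar' := hfar (φ k) z hzX (by linarith)
  have hdk : dist (xs (φ k)) xl < ε/2 := hk₀ k (le_max_left _ _)
  have : dist (xs (φ k)) z ≤ dist (xs (φ k)) xl + dist xl z := dist_triangle _ _ _
  linarith

lemma approx_supl {X : Set (EuclideanSpace ℝ (Fin N))} {s : EuclideanSpace ℝ (Fin N) → ℝ}
    (hXc : IsCompact X) (hs : Continuous s) (hs1 : ∀ x, s x ≤ 1)
    (hcyl : HasCylinderStructure X s) {v₁ : ℝ} (h0 : 0 < v₁) (h1 : v₁ < 1)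
    {ε : ℝ} (hε : 0 < ε) :
    ∃ η > 0, ∀ x ∈ X, v₁ - η ≤ s x → ∃ z ∈ X, v₁ + η ≤ s z ∧ dist x z ≤ ε := by
  by_contra hcon
  push_neg at hcon
  choose xs hxsX hxsge hfar using fun n : ℕ => hcon (1/((n:ℝ)+1)) (by positivity)
  obtain ⟨xl, hxlX, φ, hφ, hconv⟩ := hXc.tendsto_subseq hxsX
  have hφtop : Tendsto φ atTop atTop := hφ.tendsto_atTop
  have hslim : Tendsto (fun k => s (xs (φ k))) atTop (nhds (s xl)) :=
    (hs.tendsto xl).comp hconv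
  have hlower : Tendsto (fun k => v₁ - 1/((φ k : ℝ)+1)) atTop (nhds (v₁ - 0)) :=
    tendsto_const_nhds.sub (tendsto_one_div_add_atTop_nhds_zero_nat.comp hφtop)
  have hsxl : v₁ ≤ s xl := by
    have := le_of_tendsto_of_tendsto' hlower hslim (fun k => hxsge (φ k))
    simpa using this
  have hclaim : ∃ m : ℕ, ∃ z ∈ X, v₁ + 1/((m:ℝ)+1) ≤ s z ∧ dist xl z ≤ ε/2 := by
    by_cases hio : s xl ∈ Set.Ioo (0:ℝ) 1
    · obtain ⟨η', hη', hlev⟩ := exists_level_near hcyl hxlX hio (half_pos hε)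
      obtain ⟨m, hm⟩ := exists_nat_one_div_lt (lt_min hη' (by linarith : (0:ℝ) < 1 - v₁))
      have hmη : 1/((m:ℝ)+1) < η' := hm.trans_le (min_le_left _ _)
      have hmv : 1/((m:ℝ)+1) < 1 - v₁ := hm.trans_le (min_le_right _ _)
      have hmpos : (0:ℝ) < 1/((m:ℝ)+1) := by positivity
      set t := max (s xl) (v₁ + 1/((m:ℝ)+1)) with htdef
      have htIoo : t ∈ Set.Ioo (0:ℝ) 1 :=
        ⟨lt_of_lt_of_le hio.1 (le_max_left _ _), max_lt hio.2 (by linarith)⟩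
      have htcl : |t - s xl| < η' := by
        rw [abs_sub_lt_iff]
        constructor
        · have : t ≤ s xl + 1/((m:ℝ)+1) := max_le (by linarith) (by linarith)
          linarith
        · have : s xl ≤ t := le_max_left _ _
          linarith
      obtain ⟨z, hzX, hzt, hzd⟩ := hlev t htIoo htcl
      exact ⟨m, z, hzX, by rw [hzt]; exact le_max_right _ _, hzd⟩
    · have hz : s xl = 1 := by
        rcases lt_or_ge 0 (s xl) with h | h
        · by_contra hne1
          exact hio ⟨h, lt_of_le_of_ne (hs1 xl) hne1⟩
        · linarith
      obtain ⟨m, hm⟩ := exists_nat_one_div_lt (by linarith : (0:ℝ) < 1 - v₁)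
      exact ⟨m, xl, hxlX, by linarith, by simp; positivity⟩
  obtain ⟨m, z, hzX, hzge, hzd⟩ := hclaim
  obtain ⟨k₀, hk₀⟩ := Metric.tendsto_atTop.mp hconv (ε/2) (half_pos hε)
  set k := max k₀ m with hk
  have hφk : (m:ℝ) + 1 ≤ (φ k : ℝ) + 1 := by
    have h' : m ≤ φ k := le_trans (le_max_right k₀ m) (hφ.le_apply)
    have h'' : (m:ℝ) ≤ (φ k : ℝ) := Nat.cast_le.mpr h'
    linarith
  have hinv : 1/((φ k : ℝ)+1) ≤ 1/((m:ℝ)+1) :=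
    one_div_le_one_div_of_le (by positivity) hφk
  have hfar' := hfar (φ k) z hzX (by linarith)
  have hdk : dist (xs (φ k)) xl < ε/2 := hk₀ k (le_max_left _ _)
  have : dist (xs (φ k)) z ≤ dist (xs (φ k)) xl + dist xl z := dist_triangle _ _ _
  linarith

lemma approx_ival {X : Set (EuclideanSpace ℝ (Fin N))} {s : EuclideanSpace ℝ (Fin N) → ℝ}
    (hXc : IsCompact X) (hs : Continuous s)
    (hcyl : HasCylinderStructure X s) {v₁ v₂ : ℝ} (h0 : 0 < v₁) (h12 : v₁ < v₂) (h1 : v₂ < 1)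
    {ε : ℝ} (hε : 0 < ε) :
    ∃ η > 0, ∀ x ∈ X, v₁ - η ≤ s x → s x ≤ v₂ + η →
      ∃ z ∈ X, v₁ + η ≤ s z ∧ s z ≤ v₂ - η ∧ dist x z ≤ ε := by
  by_contra hcon
  push_neg at hcon
  choose xs hxsX hxsge hxsle hfar using fun n : ℕ => hcon (1/((n:ℝ)+1)) (by positivity)
  obtain ⟨xl, hxlX, φ, hφ, hconv⟩ := hXc.tendsto_subseq hxsX
  have hφtop : Tendsto φ atTop atTop := hφ.tendsto_atTop
  have hslim : Tendsto (fun k => s (xs (φ k))) atTop (nhds (s xl)) :=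
    (hs.tendsto xl).comp hconv
  have hlower : Tendsto (fun k => v₁ - 1/((φ k : ℝ)+1)) atTop (nhds (v₁ - 0)) :=
    tendsto_const_nhds.sub (tendsto_one_div_add_atTop_nhds_zero_nat.comp hφtop)
  have hupper : Tendsto (fun k => v₂ + 1/((φ k : ℝ)+1)) atTop (nhds (v₂ + 0)) :=
    tendsto_const_nhds.add (tendsto_one_div_add_atTop_nhds_zero_nat.comp hφtop)
  have hge : v₁ ≤ s xl := by
    have := le_of_tendsto_of_tendsto' hlower hslim (fun k => hxsge (φ k))
    simpa using this
  have hle : s xl ≤ v₂ := by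
    have := le_of_tendsto_of_tendsto' hslim hupper (fun k => hxsle (φ k))
    simpa using this
  have hio : s xl ∈ Set.Ioo (0:ℝ) 1 := ⟨by linarith, by linarith⟩
  obtain ⟨η', hη', hlev⟩ := exists_level_near hcyl hxlX hio (half_pos hε)
  obtain ⟨m, hm⟩ := exists_nat_one_div_lt (lt_min hη' (by linarith : (0:ℝ) < (v₂ - v₁)/2))
  have hmη : 1/((m:ℝ)+1) < η' := hm.trans_le (min_le_left _ _)
  have hmv : 1/((m:ℝ)+1) < (v₂ - v₁)/2 := hm.trans_le (min_le_right _ _)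
  have hmpos : (0:ℝ) < 1/((m:ℝ)+1) := by positivity
  set h := 1/((m:ℝ)+1) with hhdef
  set t := min (max (s xl) (v₁ + h)) (v₂ - h) with htdef
  have htge : v₁ + h ≤ t := le_min (le_max_right _ _) (by linarith)
  have htle : t ≤ v₂ - h := min_le_right _ _
  have htIoo : t ∈ Set.Ioo (0:ℝ) 1 := ⟨by linarith, by linarith⟩
  have htcl : |t - s xl| < η' := by
    rw [abs_sub_lt_iff]
    constructor
    · have h2 : max (s xl) (v₁ + h) ≤ s xl + h := max_le (by linarith) (by linarith)
      have : t ≤ s xl + h := le_trans (min_le_left _ _) h2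
      linarith
    · have : s xl - h ≤ t := le_min (le_trans (by linarith) (le_max_left _ _)) (by linarith)
      linarith
  obtain ⟨z, hzX, hzt, hzd⟩ := hlev t htIoo htcl
  obtain ⟨k₀, hk₀⟩ := Metric.tendsto_atTop.mp hconv (ε/2) (half_pos hε)
  set k := max k₀ m with hk
  have hφk : (m:ℝ) + 1 ≤ (φ k : ℝ) + 1 := by
    have h' : m ≤ φ k := le_trans (le_max_right k₀ m) (hφ.le_apply)
    have h'' : (m:ℝ) ≤ (φ k : ℝ) := Nat.cast_le.mpr h'
    linarith
  have hinv : 1/((φ k : ℝ)+1) ≤ 1/((m:ℝ)+1) :=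
    one_div_le_one_div_of_le (by positivity) hφk
  have hfar' := hfar (φ k) z hzX (by rw [hzt]; linarith) (by rw [hzt]; linarith)
  have hdk : dist (xs (φ k)) xl < ε/2 := hk₀ k (le_max_left _ _)
  have : dist (xs (φ k)) z ≤ dist (xs (φ k)) xl + dist xl z := dist_triangle _ _ _
  linarith

lemma transfer {X X' Sg Sg' : Set (EuclideanSpace ℝ (Fin N))} {δ : ℝ} (hδ : 0 < δ)
    (hXX' : EMetric.hausdorffEdist X X' < ENNReal.ofReal δ)
    (hSS' : EMetric.hausdorffEdist Sg Sg' < ENNReal.ofReal δ)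
    {x : EuclideanSpace ℝ (Fin N)} (hx : x ∈ X) :
    ∃ y ∈ X', dist x y ≤ δ ∧ inducedStrat Sg' y ≤ inducedStrat Sg x + 2*δ ∧
      inducedStrat Sg x ≤ inducedStrat Sg' y + 2*δ := by
  obtain ⟨y, hy, hd⟩ := EMetric.exists_edist_lt_of_hausdorffEdist_lt hx hXX'
  rw [edist_lt_ofReal] at hd
  have l1 := strat_lip Sg' y x
  have l2 := strat_lip Sg' x y
  have c1 := strat_close hδ.le hSS' x
  have c2 := strat_close hδ.le (by rwa [EMetric.hausdorffEdist, Metric.hausdorffEDist_comm] at hSS') x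
  have hdc : dist y x = dist x y := dist_comm _ _
  exact ⟨y, hy, hd.le, by linarith, by linarith⟩

/-- Diagram-level continuity and Lipschitz continuity of the persistent stratified
homotopy type `ε_P^v` at a compact cylindrically stratified sample. -/
theorem persistent_stratified_continuous_and_lipschitz {N : ℕ}
    (X Sg : Set (EuclideanSpace ℝ (Fin N)))
    (hSX : Sg ⊆ X) (hne : Sg.Nonempty) (hX : IsCompact X)
    (hcyl : HasCylinderStructure X (inducedStrat Sg))
    (v₁ v₂ : ℝ) (hv : (v₁, v₂) ∈ Omega) :
    (∀ ε : ℝ, 0 < ε → ∃ δ : ℝ, 0 < δ ∧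
      ∀ X' Sg' : Set (EuclideanSpace ℝ (Fin N)),
        Sg' ⊆ X' → Sg'.Nonempty →
        EMetric.hausdorffEdist X X' < ENNReal.ofReal δ →
        EMetric.hausdorffEdist Sg Sg' < ENNReal.ofReal δ →
        diagDist (Dv X (inducedStrat Sg) (v₁, v₂))
            (Dv X' (inducedStrat Sg') (v₁, v₂)) ≤ ENNReal.ofReal ε) ∧
    (∀ K : ℝ, 0 ≤ K → ∀ ρ : ℝ, 0 < ρ →
      (∀ a ∈ Set.Ioo (v₁ - ρ) (v₁ + ρ), ∀ a' ∈ Set.Ioo (v₁ - ρ) (v₁ + ρ),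
       ∀ b ∈ Set.Ioo (v₂ - ρ) (v₂ + ρ), ∀ b' ∈ Set.Ioo (v₂ - ρ) (v₂ + ρ),
        a ≤ b → a' ≤ b' →
        EMetric.hausdorffEdist (ival X (inducedStrat Sg) a b)
            (ival X (inducedStrat Sg) a' b') ≤
          ENNReal.ofReal (K * max |a - a'| |b - b'|)) →
      ∃ δ₀ : ℝ, 0 < δ₀ ∧ ∀ δ : ℝ, 0 < δ → δ ≤ δ₀ →
        ∀ X' Sg' : Set (EuclideanSpace ℝ (Fin N)),
          Sg' ⊆ X' → Sg'.Nonempty →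
          EMetric.hausdorffEdist X X' < ENNReal.ofReal δ →
          EMetric.hausdorffEdist Sg Sg' < ENNReal.ofReal δ →
          diagDist (Dv X (inducedStrat Sg) (v₁, v₂))
              (Dv X' (inducedStrat Sg') (v₁, v₂)) ≤
            ENNReal.ofReal (2 * (K + 1) * δ)) := by
  obtain ⟨hv1, hv'⟩ := hv
  obtain ⟨hv12, hv2⟩ := hv'
  have hscont : Continuous (inducedStrat Sg) := strat_cont Sg
  constructor
  · -- continuity
    intro ε hε
    obtain ⟨η₁, hη₁, hC1⟩ :=
      approx_sub hX hscont (strat_nonneg Sg) hcyl (hv1.trans hv12) hv2 (half_pos hε)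
    obtain ⟨η₂, hη₂, hC2⟩ :=
      approx_supl hX hscont (strat_le_one Sg) hcyl hv1 (hv12.trans hv2) (half_pos hε)
    obtain ⟨η₃, hη₃, hC3⟩ := approx_ival hX hscont hcyl hv1 hv12 hv2 (half_pos hε)
    set η := min η₁ (min η₂ η₃) with hηdef
    have hηpos : 0 < η := lt_min hη₁ (lt_min hη₂ hη₃)
    refine ⟨min (η/2) (ε/2), lt_min (by linarith) (by linarith), ?_⟩
    intro X' Sg' hSX' hne' hXX' hSS'
    set δ := min (η/2) (ε/2) with hδdef
    have hδpos : 0 < δ := lt_min (by linarith) (by linarith)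
    have hδη : 2*δ ≤ η := by
      have := min_le_left (η/2) (ε/2); linarith
    have hδ1 : 2*δ ≤ η₁ := le_trans hδη (min_le_left _ _)
    have hδ2 : 2*δ ≤ η₂ := le_trans hδη (le_trans (min_le_right _ _) (min_le_left _ _))
    have hδ3 : 2*δ ≤ η₃ := le_trans hδη (le_trans (min_le_right _ _) (min_le_right _ _))
    have hδε : δ ≤ ε/2 := min_le_right _ _
    have hT : ∀ x ∈ X, ∃ y ∈ X', dist x y ≤ δ ∧
        inducedStrat Sg' y ≤ inducedStrat Sg x + 2*δ ∧
        inducedStrat Sg x ≤ inducedStrat Sg' y + 2*δ :=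
      fun x hx => transfer hδpos hXX' hSS' hx
    have hT' : ∀ y ∈ X', ∃ x ∈ X, dist y x ≤ δ ∧
        inducedStrat Sg x ≤ inducedStrat Sg' y + 2*δ ∧
        inducedStrat Sg' y ≤ inducedStrat Sg x + 2*δ := by
      intro y hy
      obtain ⟨x, hx, hd, h1, h2⟩ := transfer hδpos
        (by rwa [EMetric.hausdorffEdist, Metric.hausdorffEDist_comm] at hXX')
        (by rwa [EMetric.hausdorffEdist, Metric.hausdorffEDist_comm] at hSS') hy
      exact ⟨x, hx, hd, h1, h2⟩
    simp only [diagDist, Dv]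
    refine max_le ?_ (max_le ?_ ?_)
    · apply haus_le hε.le
      · rintro a ⟨haX, hab⟩
        obtain ⟨z, hzX, hz2, hzd⟩ := hC1 a haX (by linarith)
        obtain ⟨y, hyX', hyd, hy1, _⟩ := hT z hzX
        refine ⟨y, ⟨hyX', by linarith⟩, ?_⟩
        calc dist a y ≤ dist a z + dist z y := dist_triangle _ _ _
          _ ≤ ε := by linarith
      · rintro b ⟨hbX', hbb⟩
        obtain ⟨x, hxX, hd, hx1, _⟩ := hT' b hbX'
        obtain ⟨z, hzX, hz2, hzd⟩ := hC1 x hxX (by linarith)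
        refine ⟨z, ⟨hzX, by linarith⟩, ?_⟩
        calc dist b z ≤ dist b x + dist x z := dist_triangle _ _ _
          _ ≤ ε := by linarith
    · apply haus_le hε.le
      · rintro a ⟨haX, ha1, ha2⟩
        obtain ⟨z, hzX, hz1, hz2, hzd⟩ := hC3 a haX (by linarith) (by linarith)
        obtain ⟨y, hyX', hyd, hu, hl⟩ := hT z hzX
        refine ⟨y, ⟨hyX', by linarith, by linarith⟩, ?_⟩
        calc dist a y ≤ dist a z + dist z y := dist_triangle _ _ _
          _ ≤ ε := by linarith
      · rintro b ⟨hbX', hb1, hb2⟩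
        obtain ⟨x, hxX, hd, hxu, hxl⟩ := hT' b hbX'
        obtain ⟨z, hzX, hz1, hz2, hzd⟩ := hC3 x hxX (by linarith) (by linarith)
        refine ⟨z, ⟨hzX, by linarith, by linarith⟩, ?_⟩
        calc dist b z ≤ dist b x + dist x z := dist_triangle _ _ _
          _ ≤ ε := by linarith
    · apply haus_le hε.le
      · rintro a ⟨haX, ha1⟩
        obtain ⟨z, hzX, hz1, hzd⟩ := hC2 a haX (by linarith)
        obtain ⟨y, hyX', hyd, _, hl⟩ := hT z hzX
        refine ⟨y, ⟨hyX', by linarith⟩, ?_⟩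
        calc dist a y ≤ dist a z + dist z y := dist_triangle _ _ _
          _ ≤ ε := by linarith
      · rintro b ⟨hbX', hb1⟩
        obtain ⟨x, hxX, hd, hxu, hxl⟩ := hT' b hbX'
        obtain ⟨z, hzX, hz1, hzd⟩ := hC2 x hxX (by linarith)
        refine ⟨z, ⟨hzX, by linarith⟩, ?_⟩
        calc dist b z ≤ dist b x + dist x z := dist_triangle _ _ _
          _ ≤ ε := by linarith
  · -- Lipschitz
    intro K hK ρ hρ hLip
    refine ⟨min (ρ/4) ((v₂ - v₁)/8), lt_min (by linarith) (by linarith), ?_⟩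
    intro δ hδ hδ0 X' Sg' hSX' hne' hXX' hSS'
    have hδρ : 2*δ < ρ := by
      have := le_trans hδ0 (min_le_left (ρ/4) ((v₂-v₁)/8)); linarith
    have h4δ : v₁ + 2*δ ≤ v₂ - 2*δ := by
      have := le_trans hδ0 (min_le_right (ρ/4) ((v₂-v₁)/8)); linarith
    have hKδ : 0 ≤ K*δ := mul_nonneg hK hδ.le
    have hexp : 2*(K+1)*δ = 2*K*δ + 2*δ := by ring
    have h2K : (0:ℝ) ≤ 2*(K+1)*δ := by linarith
    have hIa : v₁ ∈ Set.Ioo (v₁-ρ) (v₁+ρ) := ⟨by linarith, by linarith⟩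
    have hIa2 : v₁ + 2*δ ∈ Set.Ioo (v₁-ρ) (v₁+ρ) := ⟨by linarith, by linarith⟩
    have hIa3 : v₁ - 2*δ ∈ Set.Ioo (v₁-ρ) (v₁+ρ) := ⟨by linarith, by linarith⟩
    have hIb : v₂ ∈ Set.Ioo (v₂-ρ) (v₂+ρ) := ⟨by linarith, by linarith⟩
    have hIb2 : v₂ - 2*δ ∈ Set.Ioo (v₂-ρ) (v₂+ρ) := ⟨by linarith, by linarith⟩
    have hIb3 : v₂ + 2*δ ∈ Set.Ioo (v₂-ρ) (v₂+ρ) := ⟨by linarith, by linarith⟩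
    have step : ∀ a a' b b' : ℝ, a ∈ Set.Ioo (v₁-ρ) (v₁+ρ) → a' ∈ Set.Ioo (v₁-ρ) (v₁+ρ) →
        b ∈ Set.Ioo (v₂-ρ) (v₂+ρ) → b' ∈ Set.Ioo (v₂-ρ) (v₂+ρ) → a ≤ b → a' ≤ b' →
        max |a - a'| |b - b'| ≤ 2*δ →
        ∀ x ∈ ival X (inducedStrat Sg) a b,
          ∃ z ∈ ival X (inducedStrat Sg) a' b', dist x z ≤ 2*K*δ + δ := by
      intro a a' b b' ha ha' hb hb' hab hab' hmax x hx
      have hKm : K * max |a - a'| |b - b'| ≤ 2*K*δ := by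
        have := mul_le_mul_of_nonneg_left hmax hK
        linarith
      have hH : EMetric.hausdorffEdist (ival X (inducedStrat Sg) a b)
          (ival X (inducedStrat Sg) a' b') ≤ ENNReal.ofReal (2*K*δ) :=
        (hLip a ha a' ha' b hb b' hb' hab hab').trans (ENNReal.ofReal_le_ofReal hKm)
      exact near_of_haus hx (by linarith) (by linarith) hH
    have hT : ∀ x ∈ X, ∃ y ∈ X', dist x y ≤ δ ∧
        inducedStrat Sg' y ≤ inducedStrat Sg x + 2*δ ∧
        inducedStrat Sg x ≤ inducedStrat Sg' y + 2*δ :=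
      fun x hx => transfer hδ hXX' hSS' hx
    have hT' : ∀ y ∈ X', ∃ x ∈ X, dist y x ≤ δ ∧
        inducedStrat Sg x ≤ inducedStrat Sg' y + 2*δ ∧
        inducedStrat Sg' y ≤ inducedStrat Sg x + 2*δ := by
      intro y hy
      obtain ⟨x, hx, hd, h1, h2⟩ := transfer hδ
        (by rwa [EMetric.hausdorffEdist, Metric.hausdorffEDist_comm] at hXX')
        (by rwa [EMetric.hausdorffEdist, Metric.hausdorffEDist_comm] at hSS') hy
      exact ⟨x, hx, hd, h1, h2⟩
    simp only [diagDist, Dv]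
    refine max_le ?_ (max_le ?_ ?_)
    · apply haus_le h2K
      · rintro a ⟨haX, hab⟩
        by_cases hcase : inducedStrat Sg a ≤ v₂ - 2*δ
        · obtain ⟨y, hyX', hyd, hu, _⟩ := hT a haX
          exact ⟨y, ⟨hyX', by linarith⟩, by linarith⟩
        · have hmem : a ∈ ival X (inducedStrat Sg) v₁ v₂ := ⟨haX, by linarith, hab⟩
          obtain ⟨z, hz, hzd⟩ := step v₁ v₁ v₂ (v₂-2*δ) hIa hIa hIb hIb2 (by linarith)
            (by linarith)
            (max_le (abs_le.mpr ⟨by linarith, by linarith⟩)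
              (abs_le.mpr ⟨by linarith, by linarith⟩)) a hmem
          obtain ⟨hzX, hz1, hz2⟩ := hz
          obtain ⟨y, hyX', hyd, hu, _⟩ := hT z hzX
          refine ⟨y, ⟨hyX', by linarith⟩, ?_⟩
          calc dist a y ≤ dist a z + dist z y := dist_triangle _ _ _
            _ ≤ 2*(K+1)*δ := by linarith
      · rintro b ⟨hbX', hbb⟩
        obtain ⟨x, hxX, hd, hxu, hxl⟩ := hT' b hbX'
        by_cases hcase : inducedStrat Sg x ≤ v₂
        · exact ⟨x, ⟨hxX, hcase⟩, by linarith⟩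
        · have hmem : x ∈ ival X (inducedStrat Sg) v₁ (v₂+2*δ) :=
            ⟨hxX, by linarith, by linarith⟩
          obtain ⟨z, hz, hzd⟩ := step v₁ v₁ (v₂+2*δ) v₂ hIa hIa hIb3 hIb (by linarith)
            (by linarith)
            (max_le (abs_le.mpr ⟨by linarith, by linarith⟩)
              (abs_le.mpr ⟨by linarith, by linarith⟩)) x hmem
          obtain ⟨hzX, hz1, hz2⟩ := hz
          refine ⟨z, ⟨hzX, hz2⟩, ?_⟩
          calc dist b z ≤ dist b x + dist x z := dist_triangle _ _ _
            _ ≤ 2*(K+1)*δ := by linarith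
    · apply haus_le h2K
      · rintro a ⟨haX, ha1, ha2⟩
        obtain ⟨z, hz, hzd⟩ := step v₁ (v₁+2*δ) v₂ (v₂-2*δ) hIa hIa2 hIb hIb2
          (by linarith) h4δ
          (max_le (abs_le.mpr ⟨by linarith, by linarith⟩)
            (abs_le.mpr ⟨by linarith, by linarith⟩)) a ⟨haX, ha1, ha2⟩
        obtain ⟨hzX, hz1, hz2⟩ := hz
        obtain ⟨y, hyX', hyd, hu, hl⟩ := hT z hzX
        refine ⟨y, ⟨hyX', by linarith, by linarith⟩, ?_⟩
        calc dist a y ≤ dist a z + dist z y := dist_triangle _ _ _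
          _ ≤ 2*(K+1)*δ := by linarith
      · rintro b ⟨hbX', hb1, hb2⟩
        obtain ⟨x, hxX, hd, hxu, hxl⟩ := hT' b hbX'
        have hmem : x ∈ ival X (inducedStrat Sg) (v₁-2*δ) (v₂+2*δ) :=
          ⟨hxX, by linarith, by linarith⟩
        obtain ⟨z, hz, hzd⟩ := step (v₁-2*δ) v₁ (v₂+2*δ) v₂ hIa3 hIa hIb3 hIb
          (by linarith) (by linarith)
          (max_le (abs_le.mpr ⟨by linarith, by linarith⟩)
            (abs_le.mpr ⟨by linarith, by linarith⟩)) x hmem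
        obtain ⟨hzX, hz1, hz2⟩ := hz
        refine ⟨z, ⟨hzX, hz1, hz2⟩, ?_⟩
        calc dist b z ≤ dist b x + dist x z := dist_triangle _ _ _
          _ ≤ 2*(K+1)*δ := by linarith
    · apply haus_le h2K
      · rintro a ⟨haX, ha1⟩
        by_cases hcase : v₁ + 2*δ ≤ inducedStrat Sg a
        · obtain ⟨y, hyX', hyd, _, hl⟩ := hT a haX
          exact ⟨y, ⟨hyX', by linarith⟩, by linarith⟩
        · have hmem : a ∈ ival X (inducedStrat Sg) v₁ v₂ := ⟨haX, ha1, by linarith⟩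
          obtain ⟨z, hz, hzd⟩ := step v₁ (v₁+2*δ) v₂ v₂ hIa hIa2 hIb hIb (by linarith)
            (by linarith)
            (max_le (abs_le.mpr ⟨by linarith, by linarith⟩)
              (abs_le.mpr ⟨by linarith, by linarith⟩)) a hmem
          obtain ⟨hzX, hz1, hz2⟩ := hz
          obtain ⟨y, hyX', hyd, _, hl⟩ := hT z hzX
          refine ⟨y, ⟨hyX', by linarith⟩, ?_⟩
          calc dist a y ≤ dist a z + dist z y := dist_triangle _ _ _
            _ ≤ 2*(K+1)*δ := by linarith
      · rintro b ⟨hbX', hb1⟩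
        obtain ⟨x, hxX, hd, hxu, hxl⟩ := hT' b hbX'
        by_cases hcase : v₁ ≤ inducedStrat Sg x
        · exact ⟨x, ⟨hxX, hcase⟩, by linarith⟩
        · have hmem : x ∈ ival X (inducedStrat Sg) (v₁-2*δ) v₂ :=
            ⟨hxX, by linarith, by linarith⟩
          obtain ⟨z, hz, hzd⟩ := step (v₁-2*δ) v₁ v₂ v₂ hIa3 hIa hIb hIb (by linarith)
            (by linarith)
            (max_le (abs_le.mpr ⟨by linarith, by linarith⟩)
              (abs_le.mpr ⟨by linarith, by linarith⟩)) x hmem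
          obtain ⟨hzX, hz1, hz2⟩ := hz
          refine ⟨z, ⟨hzX, hz1⟩, ?_⟩
          calc dist b z ≤ dist b x + dist x z := dist_triangle _ _ _
            _ ≤ 2*(K+1)*δ := by linarith


end Stmt12
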